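/- Let K be a field of characteristic 2 and let a, b ∈ ℤ with a ≡ b (mod 2). Then ⁅x_1^a, x_2^b⁆ ∈ T_ℤ(U_1). (The polynomials ⁅x_1^a, x_2^b⁆, with a and b of the same parity, are ℤ-graded identities of U_1.) -/

import Mathlib

open FreeLieAlgebra LaurentPolynomial

/-- The free Lie algebra `L` over `K` on the generators `x_i^a`, `(a, i) : ℤ × ℕ`;
the generator `x_i^a := FreeLieAlgebra.of K (a, i)` has ℤ-degree `a`. -/
abbrev FL (K : Type*) [Field K] := FreeLieAlgebra K (ℤ × ℕ)

variable (K : Type*) [Field K]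

/-- Iterated Lie brackets of generators whose ℤ-degrees sum to `a`. -/
inductive IsHomBracket : FL K → ℤ → Prop
  | gen (a : ℤ) (i : ℕ) : IsHomBracket (FreeLieAlgebra.of K (a, i)) a
  | bracket {u v : FL K} {a b : ℤ} :
      IsHomBracket u a → IsHomBracket v b → IsHomBracket ⁅u, v⁆ (a + b)

/-- The homogeneous component `L_a` of the free Lie algebra. -/
noncomputable def homComp (a : ℤ) : Submodule K (FL K) :=
  Submodule.span K {w : FL K | IsHomBracket K w a}

/-- A graded endomorphism of the free Lie algebra. -/
def IsGradedEndo (φ : FL K →ₗ⁅K⁆ FL K) : Prop :=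
  ∀ (a : ℤ) (i : ℕ), φ (FreeLieAlgebra.of K (a, i)) ∈ homComp K a

/-- A `T_ℤ`-ideal: a Lie ideal stable under all graded endomorphisms. -/
def IsTIdeal (I : LieIdeal K (FL K)) : Prop :=
  ∀ φ : FL K →ₗ⁅K⁆ FL K, IsGradedEndo K φ → ∀ x ∈ I, φ x ∈ I

/-- `⟨S⟩_{T_ℤ}`, the smallest `T_ℤ`-ideal containing `S` (as a set of elements). -/
def TSpan (S : Set (FL K)) : Set (FL K) :=
  {x : FL K | ∀ I : LieIdeal K (FL K), IsTIdeal K I → S ⊆ (I : Set (FL K)) → x ∈ I}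

/-- `U_1`, the Lie algebra of `K`-linear derivations of `K[t, t⁻¹]`. -/
abbrev U1 (K : Type*) [Field K] := Derivation K (LaurentPolynomial K) (LaurentPolynomial K)

/-- Evaluation of a derivation of `K[t,t⁻¹]` at `t`, as a linear map. -/
noncomputable def evalT : U1 K →ₗ[K] LaurentPolynomial K where
  toFun D := D (T 1)
  map_add' D E := by simp
  map_smul' c D := by simp

/-- The homogeneous component `(U_1)_a = {D | D t ∈ K • t^{a+1}}` of the canonical
ℤ-grading of `U_1`. -/
noncomputable def U1comp (a : ℤ) : Submodule K (U1 K) :=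
  (Submodule.span K ({T (a + 1)} : Set (LaurentPolynomial K))).comap (evalT K)

/-- `T_ℤ(U_1)`, the set of ℤ-graded identities of `U_1`. -/
def TU1 : Set (FL K) :=
  {f : FL K | ∀ v : ℤ × ℕ → U1 K, (∀ (a : ℤ) (i : ℕ), v (a, i) ∈ U1comp K a) →
    FreeLieAlgebra.lift K v f = 0}


lemma D_T_nat (D : U1 K) (m : ℕ) :
    D (T (m : ℤ)) = (m : K) • (T ((m : ℤ) - 1) * D (T 1)) := by
  cases m with
  | zero => simp [T_zero]
  | succ k =>
    have h : (T ((k : ℤ) + 1) : LaurentPolynomial K) = T 1 ^ (k + 1) := by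
      rw [T_pow]; push_cast; ring_nf
    push_cast
    rw [h, Derivation.leibniz_pow]
    have hk : (T 1 : LaurentPolynomial K) ^ (k + 1 - 1) = T ((k : ℤ) + 1 - 1) := by
      rw [T_pow]; norm_num
    rw [hk, ← Nat.cast_smul_eq_nsmul K, smul_eq_mul]
    push_cast
    rfl

lemma D_T (D : U1 K) (n : ℤ) :
    D (T n) = (n : K) • (T (n - 1) * D (T 1)) := by
  rcases le_or_gt 0 n with h | h
  · obtain ⟨m, rfl⟩ := Int.eq_ofNat_of_zero_le h
    rw [D_T_nat]; norm_num
  · obtain ⟨m, rfl⟩ : ∃ m : ℕ, n = -(m : ℤ) := ⟨n.natAbs, by omega⟩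
    have hmul : (T (-(m : ℤ)) : LaurentPolynomial K) * T (m : ℤ) = 1 := by
      rw [← T_add]; norm_num
    have hsq : (T (-(m : ℤ)) : LaurentPolynomial K) ^ 2 * (T ((m : ℤ) - 1) * D (T 1))
        = T (-(m : ℤ) - 1) * D (T 1) := by
      rw [T_pow, ← mul_assoc, ← T_add]
      congr 2
      push_cast; ring
    rw [D.leibniz_of_mul_eq_one hmul, D_T_nat, neg_smul, smul_comm, smul_eq_mul, hsq, ← neg_smul]
    push_cast
    ring_nf

lemma bracket_zero (D E : U1 K) (a b : ℤ) (c d : K)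
    (hc : D (T 1) = c • T (a + 1)) (hd : E (T 1) = d • T (b + 1))
    (hba : (a : K) = (b : K)) : (⁅D, E⁆ : U1 K) = 0 := by
  have hDT : ∀ m : ℤ, D (T m) = ((m : K) * c) • T (m + a) := by
    intro m
    rw [D_T, hc, mul_smul_comm, ← T_add, smul_smul]
    congr 2
    ring
  have hET : ∀ m : ℤ, E (T m) = ((m : K) * d) • T (m + b) := by
    intro m
    rw [D_T, hd, mul_smul_comm, ← T_add, smul_smul]
    congr 2
    ring
  have key : ∀ n : ℤ, (⁅D, E⁆ : U1 K) (T n) = 0 := by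
    intro n
    rw [Derivation.commutator_apply, hET n, D.map_smul, hDT, hDT n, E.map_smul, hET,
      smul_smul, smul_smul]
    have he : n + b + a = n + a + b := by ring
    rw [he, ← sub_smul]
    have hz : (n : K) * d * ((↑(n + b) : K) * c) - (n : K) * c * ((↑(n + a) : K) * d) = 0 := by
      push_cast
      linear_combination (-(n : K) * c * d) * hba
    rw [hz, zero_smul]
  have hall : ∀ f, (⁅D, E⁆ : U1 K) f = 0 := by
    intro f
    induction f using LaurentPolynomial.induction_on' with
    | add p q hp hq => rw [map_add, hp, hq, add_zero]
    | C_mul_T n r =>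
      rw [Derivation.leibniz, key, C_eq_algebraMap, Derivation.map_algebraMap,
        smul_zero, smul_zero, add_zero]
  exact Derivation.ext fun f => (hall f).trans (Derivation.zero_apply f).symm

/-- Lemma 3.1 restated: the polynomials `⁅x_1^a, x_2^b⁆`, with `a ≡ b (mod 2)`, are
ℤ-graded identities of `U_1` in characteristic two. -/
theorem sameParity_bracket_mem_TU1 [CharP K 2] (a b : ℤ) (hab : a ≡ b [ZMOD 2]) :
    ⁅FreeLieAlgebra.of K (a, 1), FreeLieAlgebra.of K (b, 2)⁆ ∈ TU1 K := by
  intro v hv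
  rw [LieHom.map_lie, FreeLieAlgebra.lift_of_apply, FreeLieAlgebra.lift_of_apply]
  have hD := hv a 1
  have hE := hv b 2
  rw [U1comp, Submodule.mem_comap] at hD hE
  obtain ⟨c, hc⟩ := Submodule.mem_span_singleton.1 hD
  obtain ⟨d, hd⟩ := Submodule.mem_span_singleton.1 hE
  have hc' : (v (a, 1)) (T 1) = c • T (a + 1) := hc.symm
  have hd' : (v (b, 2)) (T 1) = d • T (b + 1) := hd.symm
  have hba : (a : K) = (b : K) := by
    obtain ⟨k, hk⟩ := Int.ModEq.dvd hab
    have h0 : (b : K) - a = ((2 * k : ℤ) : K) := by rw [← hk]; push_cast; ring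
    have h2 : (2 : K) = 0 := by exact_mod_cast CharP.cast_eq_zero K 2
    push_cast at h0
    rw [h2, zero_mul] at h0
    exact (sub_eq_zero.mp h0).symm
  exact bracket_zero K _ _ a b c d hc' hd' hba
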